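/- For every integer k with k ≠ 0 and k ≠ 1, the quotient of the additive group ℤ[1/k] by the subgroup (k−1)·ℤ[1/k] is a cyclic group of order |k−1|; equivalently, ℤ[1/k]/(k−1)ℤ[1/k] ≅ ℤ/(k−1)ℤ. -/

import Mathlib

theorem aux_pow_mem (k : ℤ) (m : ℕ) :
    ((k : ℚ)⁻¹) ^ m ∈ Subring.closure {((k : ℚ))⁻¹} := by
  induction m with
  | zero => simpa using Subring.one_mem _
  | succ i ih => rw [pow_succ]; exact Subring.mul_mem _ ih (Subring.subset_closure rfl)

theorem aux_mem_closure_iff (k : ℤ) (hk : k ≠ 0) (x : ℚ) :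
    x ∈ Subring.closure {((k : ℚ))⁻¹} ↔ ∃ (a : ℤ) (m : ℕ), x * (k : ℚ) ^ m = a := by
  have hkQ : (k : ℚ) ≠ 0 := Int.cast_ne_zero.mpr hk
  constructor
  · intro hx
    induction hx using Subring.closure_induction with
    | mem y hy =>
      rcases Set.mem_singleton_iff.mp hy with rfl
      exact ⟨1, 1, by field_simp; simp⟩
    | zero => exact ⟨0, 0, by simp⟩
    | one => exact ⟨1, 0, by simp⟩
    | add a b _ _ ha hb =>
      obtain ⟨p, m, hp⟩ := ha
      obtain ⟨q, l, hq⟩ := hb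
      refine ⟨p * k ^ l + q * k ^ m, m + l, ?_⟩
      push_cast
      rw [add_mul, pow_add]
      rw [show a * ((k:ℚ) ^ m * (k:ℚ) ^ l) = (a * (k:ℚ)^m) * (k:ℚ)^l by ring, hp]
      rw [show b * ((k:ℚ) ^ m * (k:ℚ) ^ l) = (b * (k:ℚ)^l) * (k:ℚ)^m by ring, hq]
    | neg a _ ha =>
      obtain ⟨p, m, hp⟩ := ha
      exact ⟨-p, m, by push_cast; rw [neg_mul, hp]⟩
    | mul a b _ _ ha hb =>
      obtain ⟨p, m, hp⟩ := ha
      obtain ⟨q, l, hq⟩ := hb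
      refine ⟨p * q, m + l, ?_⟩
      push_cast
      rw [pow_add, show a * b * ((k:ℚ) ^ m * (k:ℚ) ^ l) = (a * (k:ℚ)^m) * (b * (k:ℚ)^l) by ring,
        hp, hq]
  · rintro ⟨a, m, h⟩
    have hx : x = (a : ℚ) * ((k : ℚ)⁻¹) ^ m := by
      rw [inv_pow, ← h, mul_inv_cancel_right₀ (pow_ne_zero m hkQ)]
    rw [hx]
    exact Subring.mul_mem _ (intCast_mem _ a) (aux_pow_mem k m)

/-- For `k ≠ 0, 1`, the quotient of the additive group `ℤ[1/k]` by the subgroup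
`(k-1)·ℤ[1/k]` is cyclic of order `|k-1|`, i.e. isomorphic to `ZMod (k-1).natAbs`. -/
theorem quotient_k_sub_one_iso (k : ℤ) (hk : k ≠ 0) (hk1 : k ≠ 1) :
    Nonempty
      (((Subring.closure {((k : ℚ))⁻¹} : Subring ℚ) ⧸
          (zsmulAddGroupHom (k - 1) :
            (Subring.closure {((k : ℚ))⁻¹} : Subring ℚ) →+
              (Subring.closure {((k : ℚ))⁻¹} : Subring ℚ)).range) ≃+
        ZMod (k - 1).natAbs) := by
  set R := (Subring.closure {((k : ℚ))⁻¹} : Subring ℚ) with hR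
  set n := (k - 1).natAbs with hn
  have hkQ : (k : ℚ) ≠ 0 := Int.cast_ne_zero.mpr hk
  have hkZ : (k : ZMod n) = 1 := by
    have : ((k - 1 : ℤ) : ZMod n) = 0 := by
      rw [ZMod.intCast_zmod_eq_zero_iff_dvd]
      exact Int.natAbs_dvd.mpr dvd_rfl
    push_cast at this
    rwa [sub_eq_zero] at this
  have hex : ∀ x : R, ∃ p : ℤ × ℕ, (x : ℚ) * (k : ℚ) ^ p.2 = p.1 := by
    intro x
    obtain ⟨a, m, h⟩ := (aux_mem_closure_iff k hk x).mp x.2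
    exact ⟨(a, m), h⟩
  let f : R → ZMod n := fun x => (((hex x).choose.1 : ℤ) : ZMod n)
  have key : ∀ (x : R) (a : ℤ) (m : ℕ), (x : ℚ) * (k : ℚ) ^ m = a → f x = (a : ZMod n) := by
    intro x a m h
    have hc := (hex x).choose_spec
    set b := (hex x).choose.1
    set l := (hex x).choose.2
    have : (a : ℚ) * (k : ℚ) ^ l = (b : ℚ) * (k : ℚ) ^ m := by
      rw [← h, ← hc]; ring
    have hz : a * k ^ l = b * k ^ m := by exact_mod_cast this
    have : ((a * k ^ l : ℤ) : ZMod n) = ((b * k ^ m : ℤ) : ZMod n) := by rw [hz]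
    push_cast at this
    simpa [hkZ] using this.symm
  have fadd : ∀ x y : R, f (x + y) = f x + f y := by
    intro x y
    obtain ⟨⟨a, m⟩, ha⟩ := hex x
    obtain ⟨⟨b, l⟩, hb⟩ := hex y
    simp only at ha hb
    have : ((x + y : R) : ℚ) * (k : ℚ) ^ (m + l) = ((a * k ^ l + b * k ^ m : ℤ) : ℚ) := by
      push_cast
      rw [add_mul, pow_add]
      rw [show (x:ℚ) * ((k:ℚ) ^ m * (k:ℚ) ^ l) = ((x:ℚ) * (k:ℚ)^m) * (k:ℚ)^l by ring, ha]
      rw [show (y:ℚ) * ((k:ℚ) ^ m * (k:ℚ) ^ l) = ((y:ℚ) * (k:ℚ)^l) * (k:ℚ)^m by ring, hb]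
    rw [key _ _ _ this, key _ _ _ ha, key _ _ _ hb]
    push_cast
    simp [hkZ]
  let φ : R →+ ZMod n := AddMonoidHom.mk' f fadd
  have hsurj : Function.Surjective φ := by
    intro z
    obtain ⟨a, rfl⟩ := ZMod.intCast_surjective z
    refine ⟨((a : ℤ) : R), ?_⟩
    have : (((a : ℤ) : R) : ℚ) * (k : ℚ) ^ 0 = (a : ℚ) := by push_cast; ring
    exact key _ a 0 this
  have hker : (zsmulAddGroupHom (k - 1) : R →+ R).range = φ.ker := by
    ext x
    constructor
    · rintro ⟨y, rfl⟩
      obtain ⟨⟨b, m⟩, hb⟩ := hex y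
      simp only at hb
      have hxy : ((zsmulAddGroupHom (k - 1) y : R) : ℚ) * (k : ℚ) ^ m
          = (((k - 1) * b : ℤ) : ℚ) := by
        show (((k - 1) • y : R) : ℚ) * (k : ℚ) ^ m = _
        push_cast
        rw [zsmul_eq_mul]
        push_cast
        rw [mul_assoc, hb]
      rw [AddMonoidHom.mem_ker]
      show f _ = 0
      rw [key _ _ _ hxy]
      push_cast
      simp [show ((k : ZMod n) - 1) = 0 by rw [hkZ]; ring]
    · intro hx
      rw [AddMonoidHom.mem_ker] at hx
      obtain ⟨⟨a, m⟩, ha⟩ := hex x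
      simp only at ha
      have h0 : (a : ZMod n) = 0 := by rw [← key _ _ _ ha]; exact hx
      have hdvd : (k - 1) ∣ a := by
        have := (ZMod.intCast_zmod_eq_zero_iff_dvd a n).mp h0
        rwa [hn, Int.natAbs_dvd] at this
      obtain ⟨b, rfl⟩ := hdvd
      have hyR : ((b : ℚ) * ((k : ℚ)⁻¹) ^ m) ∈ R := by
        exact Subring.mul_mem _ (intCast_mem _ b) (aux_pow_mem k m)
      refine ⟨⟨(b : ℚ) * ((k : ℚ)⁻¹) ^ m, hyR⟩, ?_⟩
      apply Subtype.ext
      show ((k - 1 : ℤ) • (⟨(b : ℚ) * ((k : ℚ)⁻¹) ^ m, hyR⟩ : R) : ℚ) = (x : ℚ)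
      push_cast
      have : (x : ℚ) = ((k : ℚ) - 1) * b * ((k : ℚ)⁻¹) ^ m := by
        push_cast at ha
        rw [inv_pow, ← ha, mul_inv_cancel_right₀ (pow_ne_zero m hkQ)]
      rw [zsmul_eq_mul, this]
      push_cast
      ring
  rw [hker]
  exact ⟨QuotientAddGroup.quotientKerEquivOfSurjective φ hsurj⟩
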